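/- Let ε_R = ±1 for all dyadic rectangles R ⊆ [0,1)² of area 2^{-n}. Then the set of points where Σ_{|R|=2^{-n}} ε_R h_R attains the value n+1 is a union of exactly 2^{n+1} dyadic squares of side length 2^{-(n+1)}, and every dyadic rectangle of area 2^{-(n+1)} contains exactly one of these squares. -/

import Mathlib

open Finset

/-- The L^∞-normalized Haar function of the dyadic interval `[m/2^k, (m+1)/2^k)`:
`-1` on the left half, `+1` on the right half, `0` outside. -/
noncomputable def haar (k m : ℕ) (x : ℝ) : ℝ :=
  if (m : ℝ) / 2 ^ k ≤ x ∧ x < ((m : ℝ) + 1) / 2 ^ k then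
    (if x < (2 * (m : ℝ) + 1) / 2 ^ (k + 1) then -1 else 1)
  else 0

/-- The Haar function of the dyadic rectangle `[m₁/2^k₁,(m₁+1)/2^k₁) × [m₂/2^k₂,(m₂+1)/2^k₂)`. -/
noncomputable def haar2 (k₁ m₁ k₂ m₂ : ℕ) (p : ℝ × ℝ) : ℝ :=
  haar k₁ m₁ p.1 * haar k₂ m₂ p.2

/-- The hyperbolic Haar sum `∑_{|R| = 2^{-n}} α_R h_R` over dyadic rectangles of area `2^{-n}`. -/
noncomputable def sbSum (n : ℕ) (α : ℕ → ℕ → ℕ → ℝ) (p : ℝ × ℝ) : ℝ :=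
  ∑ k ∈ Finset.range (n + 1), ∑ m₁ ∈ Finset.range (2 ^ k),
    ∑ m₂ ∈ Finset.range (2 ^ (n - k)), α k m₁ m₂ * haar2 k m₁ (n - k) m₂ p

/-- The unit square `[0,1)²`. -/
def unitSq : Set (ℝ × ℝ) := Set.Ico (0 : ℝ) 1 ×ˢ Set.Ico (0 : ℝ) 1

/-- The dyadic rectangle `[m₁/2^k₁,(m₁+1)/2^k₁) × [m₂/2^k₂,(m₂+1)/2^k₂)` as a subset of the plane. -/
def dyadicRect (k₁ m₁ k₂ m₂ : ℕ) : Set (ℝ × ℝ) :=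
  Set.Ico ((m₁ : ℝ) / 2 ^ k₁) (((m₁ : ℝ) + 1) / 2 ^ k₁) ×ˢ
    Set.Ico ((m₂ : ℝ) / 2 ^ k₂) (((m₂ : ℝ) + 1) / 2 ^ k₂)

noncomputable def sg (q i : ℕ) : ℝ := if (q / 2 ^ i) % 2 = 1 then 1 else -1

lemma sg_mem (q i : ℕ) : sg q i = 1 ∨ sg q i = -1 := by
  unfold sg; split <;> simp

lemma haar_zero {N k q m : ℕ} {x : ℝ} (hq1 : (q:ℝ)/2^N ≤ x) (hq2 : x < ((q:ℝ)+1)/2^N)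
    (hkN : k ≤ N) (hm : m ≠ q / 2 ^ (N - k)) : haar k m x = 0 := by
  unfold haar
  rw [if_neg]
  rintro ⟨h1, h2⟩
  apply hm
  have h2N : (0:ℝ) < 2 ^ N := by positivity
  have h2k : (0:ℝ) < 2 ^ k := by positivity
  have e : (2:ℝ) ^ (N - k) * 2 ^ k = 2 ^ N := by
    rw [← pow_add]; congr 1; omega
  have hA : m * 2 ^ (N - k) < q + 1 := by
    have h : (m:ℝ) / 2^k < ((q:ℝ)+1)/2^N := lt_of_le_of_lt h1 hq2
    rw [div_lt_div_iff₀ h2k h2N] at h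
    have h' : ((m * 2 ^ (N-k) : ℕ) : ℝ) < ((q + 1 : ℕ) : ℝ) := by push_cast; nlinarith
    exact_mod_cast h'
  have hB : q < (m + 1) * 2 ^ (N - k) := by
    have h : (q:ℝ) / 2^N < ((m:ℝ)+1)/2^k := lt_of_le_of_lt hq1 h2
    rw [div_lt_div_iff₀ h2N h2k] at h
    have h' : ((q:ℕ):ℝ) < (((m+1) * 2 ^ (N-k) : ℕ) : ℝ) := by push_cast; nlinarith
    exact_mod_cast h'
  symm
  exact Nat.div_eq_of_lt_le (by omega) (by omega)

lemma div_sandwich {d q t : ℕ} (hd : 0 < d) (ht : q / d = t) :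
    t * d ≤ q ∧ q + 1 ≤ (t + 1) * d := by
  subst ht
  have h1 := Nat.div_add_mod q d
  have h2 := Nat.mod_lt q hd
  obtain ⟨m, hm⟩ : ∃ m, q / d = m := ⟨_, rfl⟩
  obtain ⟨r, hr⟩ : ∃ r, q % d = r := ⟨_, rfl⟩
  rw [hm, hr] at h1
  rw [hr] at h2
  rw [hm]
  clear hm hr
  constructor <;> nlinarith

lemma haar_val {N k q : ℕ} {x : ℝ} (hq1 : (q:ℝ)/2^N ≤ x) (hq2 : x < ((q:ℝ)+1)/2^N)
    (hkN : k < N) :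
    haar k (q / 2 ^ (N - k)) x = sg q (N - 1 - k) := by
  have h2N : (0:ℝ) < 2 ^ N := by positivity
  have h2k : (0:ℝ) < 2 ^ k := by positivity
  have h2k1 : (0:ℝ) < 2 ^ (k+1) := by positivity
  obtain ⟨m, hm⟩ : ∃ m, q / 2 ^ (N - k) = m := ⟨_, rfl⟩
  obtain ⟨t, ht⟩ : ∃ t, q / 2 ^ (N - 1 - k) = t := ⟨_, rfl⟩
  rw [hm]
  have htm : t / 2 = m := by
    rw [← ht, ← hm, Nat.div_div_eq_div_mul, ← pow_succ]
    congr 2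
    omega
  have ht2 : 2 * m + t % 2 = t := by rw [← htm]; exact Nat.div_add_mod t 2
  have hmodt2 : t % 2 < 2 := Nat.mod_lt t (by norm_num)
  obtain ⟨hA, hB⟩ := div_sandwich (show 0 < 2 ^ (N-k) by positivity) hm
  obtain ⟨hC, hD⟩ := div_sandwich (show 0 < 2 ^ (N-1-k) by positivity) ht
  -- real conversions
  have e : (2:ℝ) ^ (N - k) * 2 ^ k = 2 ^ N := by
    rw [← pow_add]; congr 1; omega
  have e1 : (2:ℝ) ^ (N - 1 - k) * 2 ^ (k+1) = 2 ^ N := by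
    rw [← pow_add]; congr 1; omega
  have hOut : (m:ℝ)/2^k ≤ x ∧ x < ((m:ℝ)+1)/2^k := by
    constructor
    · refine le_trans ?_ hq1
      rw [div_le_div_iff₀ h2k h2N]
      have : ((m * 2^(N-k) : ℕ) : ℝ) ≤ (q:ℝ) := by exact_mod_cast hA
      push_cast at this ⊢
      nlinarith
    · refine lt_of_lt_of_le hq2 ?_
      rw [div_le_div_iff₀ h2N h2k]
      have : ((q+1 : ℕ) : ℝ) ≤ (((m+1) * 2^(N-k) : ℕ) : ℝ) := by exact_mod_cast hB
      push_cast at this ⊢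
      nlinarith
  unfold haar sg
  rw [if_pos hOut, ht]
  rcases Nat.mod_two_eq_zero_or_one t with h0 | h1
  · -- t even: t = 2m, left half, value -1
    have htval : t = 2 * m := by omega
    have hq' : q + 1 ≤ (2 * m + 1) * 2 ^ (N - 1 - k) := by
      rw [htval] at hD; exact hD
    have hx : x < (2 * (m:ℝ) + 1) / 2 ^ (k+1) := by
      refine lt_of_lt_of_le hq2 ?_
      rw [div_le_div_iff₀ h2N h2k1]
      have : ((q+1 : ℕ) : ℝ) ≤ (((2*m+1) * 2^(N-1-k) : ℕ) : ℝ) := by exact_mod_cast hq'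
      push_cast at this ⊢
      nlinarith
    rw [if_pos hx, if_neg (by omega)]
  · -- t odd: t = 2m+1, right half, value 1
    have htval : t = 2 * m + 1 := by omega
    have hq' : (2 * m + 1) * 2 ^ (N - 1 - k) ≤ q := by rw [htval] at hC; exact hC
    have hx : ¬ (x < (2 * (m:ℝ) + 1) / 2 ^ (k+1)) := by
      push_neg
      refine le_trans ?_ hq1
      rw [div_le_div_iff₀ h2k1 h2N]
      have : (((2*m+1) * 2^(N-1-k) : ℕ) : ℝ) ≤ (q:ℝ) := by exact_mod_cast hq'
      push_cast at this ⊢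
      nlinarith
    rw [if_neg hx, if_pos h1]

def Good (n : ℕ) (ε : ℕ → ℕ → ℕ → ℝ) (q₁ q₂ : ℕ) : Prop :=
  ∀ k ∈ Finset.range (n+1),
    ε k (q₁ / 2 ^ (n + 1 - k)) (q₂ / 2 ^ (k + 1)) * sg q₁ (n - k) * sg q₂ k = 1

lemma sbSum_eval (n : ℕ) (ε : ℕ → ℕ → ℕ → ℝ) (q₁ q₂ : ℕ)
    (h1 : q₁ < 2 ^ (n+1)) (h2 : q₂ < 2 ^ (n+1)) (p : ℝ × ℝ)
    (hp1 : (q₁:ℝ)/2^(n+1) ≤ p.1) (hp1' : p.1 < ((q₁:ℝ)+1)/2^(n+1))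
    (hp2 : (q₂:ℝ)/2^(n+1) ≤ p.2) (hp2' : p.2 < ((q₂:ℝ)+1)/2^(n+1)) :
    sbSum n ε p = ∑ k ∈ Finset.range (n+1),
      ε k (q₁ / 2 ^ (n + 1 - k)) (q₂ / 2 ^ (k + 1)) * sg q₁ (n - k) * sg q₂ k := by
  unfold sbSum
  refine Finset.sum_congr rfl fun k hk => ?_
  rw [Finset.mem_range] at hk
  have hk' : k ≤ n := by omega
  have eM1 : n + 1 - k = (n+1) - k := rfl
  have eM2 : k + 1 = (n+1) - (n-k) := by omega
  have eS2 : k = (n+1) - 1 - (n-k) := by omega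
  have hM1mem : q₁ / 2 ^ (n + 1 - k) ∈ Finset.range (2 ^ k) := by
    rw [Finset.mem_range, Nat.div_lt_iff_lt_mul (by positivity)]
    calc q₁ < 2 ^ (n+1) := h1
    _ = 2 ^ k * 2 ^ (n+1-k) := by rw [← pow_add]; congr 1; omega
  have hM2mem : q₂ / 2 ^ (k + 1) ∈ Finset.range (2 ^ (n - k)) := by
    rw [Finset.mem_range, Nat.div_lt_iff_lt_mul (by positivity)]
    calc q₂ < 2 ^ (n+1) := h2
    _ = 2 ^ (n-k) * 2 ^ (k+1) := by rw [← pow_add]; congr 1; omega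
  rw [Finset.sum_eq_single_of_mem _ hM1mem (fun m₁ _ hm₁ => ?_)]
  · rw [Finset.sum_eq_single_of_mem _ hM2mem (fun m₂ _ hm₂ => ?_)]
    · unfold haar2
      have e1 : haar k (q₁ / 2 ^ (n + 1 - k)) p.1 = sg q₁ (n - k) := by
        have h := haar_val (N := n+1) (k := k) (q := q₁) hp1 hp1' (by omega)
        rw [show (n+1) - 1 - k = n - k by omega] at h
        exact h
      have e2 : haar (n - k) (q₂ / 2 ^ (k + 1)) p.2 = sg q₂ k := by
        have h := haar_val (N := n+1) (k := n - k) (q := q₂) hp2 hp2' (by omega)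
        rw [← eS2, ← eM2] at h
        exact h
      rw [e1, e2]; ring
    · unfold haar2
      rw [haar_zero (N := n+1) hp2 hp2' (by omega) (by rw [← eM2]; exact hm₂)]
      ring
  · unfold haar2
    rw [Finset.sum_eq_zero]
    intro m₂ _
    rw [haar_zero (N := n+1) hp1 hp1' (by omega) hm₁]
    ring

lemma sum_pm_eq_card {n : ℕ} {f : ℕ → ℝ}
    (hf : ∀ k ∈ Finset.range (n+1), f k = 1 ∨ f k = -1) :
    (∑ k ∈ Finset.range (n+1), f k = (n+1 : ℝ)) ↔ ∀ k ∈ Finset.range (n+1), f k = 1 := by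
  constructor
  · intro hsum k hk
    have hz : ∑ k ∈ Finset.range (n+1), (1 - f k) = 0 := by
      rw [Finset.sum_sub_distrib, Finset.sum_const, Finset.card_range, hsum]
      simp
    have hnn : ∀ k ∈ Finset.range (n+1), 0 ≤ 1 - f k := by
      intro k hk
      rcases hf k hk with h | h <;> rw [h] <;> norm_num
    have := (Finset.sum_eq_zero_iff_of_nonneg hnn).mp hz k hk
    linarith
  · intro h
    rw [Finset.sum_congr rfl h, Finset.sum_const, Finset.card_range]
    simp

lemma pm_mul {x y : ℝ} (hx : x = 1 ∨ x = -1) (hy : y = 1 ∨ y = -1) :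
    x * y = 1 ∨ x * y = -1 := by
  rcases hx with rfl | rfl <;> rcases hy with rfl | rfl <;> norm_num

lemma pm_cancel {x y : ℝ} (hx : x = 1 ∨ x = -1) (hy : y = 1 ∨ y = -1) (h : x * y = 1) :
    y = x := by
  rcases hx with rfl | rfl <;> rcases hy with rfl | rfl <;> simp_all

lemma sg_congr {q i q' i' : ℕ} (h : q / 2 ^ i = q' / 2 ^ i') : sg q i = sg q' i' := by
  unfold sg; rw [h]

lemma box_div {p a u v w : ℕ} (hbox : p / 2 ^ u = a) (h : w = u + v) :
    p / 2 ^ w = a / 2 ^ v := by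
  rw [h, pow_add, ← Nat.div_div_eq_div_mul, hbox]

lemma div_succ_div_two (p k : ℕ) : p / 2 ^ k / 2 = p / 2 ^ (k + 1) := by
  rw [Nat.div_div_eq_div_mul, ← pow_succ]

/-- appended-bit sequences: value after shifting down -/
lemma seq_div {f : ℕ → ℕ} (hf : ∀ i, f (i+1) / 2 = f i) :
    ∀ i' i, i' ≤ i → f i / 2 ^ (i - i') = f i' := by
  intro i' i h
  induction i with
  | zero => rw [show i' = 0 by omega]; simp
  | succ i ih =>
    rcases Nat.eq_or_lt_of_le h with he | hl
    · rw [← he]; simp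
    · have h' : i' ≤ i := by omega
      rw [show i + 1 - i' = (i - i') + 1 by omega, pow_succ', ← Nat.div_div_eq_div_mul,
        hf i, ih h']

open Classical in
noncomputable def sbB (n : ℕ) (ε : ℕ → ℕ → ℕ → ℝ) (j a b : ℕ) : ℕ → ℕ
  | 0 => b
  | (i+1) => 2 * sbB n ε j a b i +
      (if ε (j - 1 - i) (a / 2 ^ (i+1)) (sbB n ε j a b i) * sg a i = 1 then 1 else 0)

open Classical in
noncomputable def sbA (n : ℕ) (ε : ℕ → ℕ → ℕ → ℝ) (j a b : ℕ) : ℕ → ℕ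
  | 0 => a
  | (i+1) => 2 * sbA n ε j a b i +
      (if ε (j + i) (sbA n ε j a b i) (b / 2 ^ (i+1)) * sg b i = 1 then 1 else 0)

lemma sbB_div_two (n : ℕ) (ε : ℕ → ℕ → ℕ → ℝ) (j a b i : ℕ) :
    sbB n ε j a b (i+1) / 2 = sbB n ε j a b i := by
  rw [sbB]
  split <;> omega

lemma sbA_div_two (n : ℕ) (ε : ℕ → ℕ → ℕ → ℝ) (j a b i : ℕ) :
    sbA n ε j a b (i+1) / 2 = sbA n ε j a b i := by
  rw [sbA]
  split <;> omega

lemma sbB_shift (n : ℕ) (ε : ℕ → ℕ → ℕ → ℝ) (j a b : ℕ) {i' i : ℕ} (h : i' ≤ i) :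
    sbB n ε j a b i / 2 ^ (i - i') = sbB n ε j a b i' :=
  seq_div (sbB_div_two n ε j a b) i' i h

lemma sbA_shift (n : ℕ) (ε : ℕ → ℕ → ℕ → ℝ) (j a b : ℕ) {i' i : ℕ} (h : i' ≤ i) :
    sbA n ε j a b i / 2 ^ (i - i') = sbA n ε j a b i' :=
  seq_div (sbA_div_two n ε j a b) i' i h

lemma sbB_bound (n : ℕ) (ε : ℕ → ℕ → ℕ → ℝ) (j a b : ℕ) {s : ℕ} (hb : b < 2 ^ s) :
    ∀ i, sbB n ε j a b i < 2 ^ (s + i) := by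
  intro i
  induction i with
  | zero => simpa [sbB] using hb
  | succ i ih =>
    rw [sbB, show s + (i+1) = (s+i)+1 by omega, pow_succ]
    split <;> omega

lemma sbA_bound (n : ℕ) (ε : ℕ → ℕ → ℕ → ℝ) (j a b : ℕ) {s : ℕ} (ha : a < 2 ^ s) :
    ∀ i, sbA n ε j a b i < 2 ^ (s + i) := by
  intro i
  induction i with
  | zero => simpa [sbA] using ha
  | succ i ih =>
    rw [sbA, show s + (i+1) = (s+i)+1 by omega, pow_succ]
    split <;> omega

lemma sg_zero_odd (x : ℕ) : sg (2*x+1) 0 = 1 := by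
  unfold sg; rw [pow_zero, Nat.div_one, if_pos (by omega)]

lemma sg_zero_even (x : ℕ) : sg (2*x) 0 = -1 := by
  unfold sg; rw [pow_zero, Nat.div_one, if_neg (by omega)]

lemma good_sb (n : ℕ) (ε : ℕ → ℕ → ℕ → ℝ)
    (hε : ∀ k m₁ m₂, ε k m₁ m₂ = 1 ∨ ε k m₁ m₂ = -1)
    (j a b : ℕ) (hj : j ≤ n+1) :
    Good n ε (sbA n ε j a b (n+1-j)) (sbB n ε j a b j) := by
  intro k hk
  rw [Finset.mem_range] at hk
  by_cases hkj : k < j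
  · obtain ⟨i, hi⟩ : ∃ i, j - 1 - k = i := ⟨_, rfl⟩
    have hbox1 : sbA n ε j a b (n+1-j) / 2 ^ (n+1-j) = a := by
      have h := sbA_shift n ε j a b (show 0 ≤ n+1-j by omega)
      rw [Nat.sub_zero] at h
      rw [h]; rfl
    have hd3 : sbB n ε j a b j / 2 ^ (k+1) = sbB n ε j a b i := by
      have h := sbB_shift n ε j a b (show i ≤ j by omega)
      rw [show j - i = k+1 by omega] at h
      exact h
    have hd4 : sbB n ε j a b j / 2 ^ k = sbB n ε j a b (i+1) := by
      have h := sbB_shift n ε j a b (show i+1 ≤ j by omega)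
      rw [show j - (i+1) = k by omega] at h
      exact h
    rw [box_div hbox1 (show n+1-k = (n+1-j)+(i+1) by omega),
      sg_congr (box_div hbox1 (show n-k = (n+1-j)+i by omega)),
      sg_congr (show sbB n ε j a b j / 2 ^ k = sbB n ε j a b (i+1) / 2 ^ 0 by
        rw [pow_zero, Nat.div_one]; exact hd4),
      hd3, show k = j - 1 - i by omega, sbB]
    by_cases hc : ε (j-1-i) (a / 2 ^ (i+1)) (sbB n ε j a b i) * sg a i = 1
    · rw [if_pos hc, sg_zero_odd, mul_one]
      exact hc
    · rw [if_neg hc]; simp only [Nat.add_zero]; rw [sg_zero_even]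
      have hEm := (pm_mul (hε (j-1-i) (a / 2^(i+1)) (sbB n ε j a b i)) (sg_mem a i)).resolve_left hc
      rw [hEm]; norm_num
  · obtain ⟨i, hi⟩ : ∃ i, k - j = i := ⟨_, rfl⟩
    have hbox2 : sbB n ε j a b j / 2 ^ j = b := by
      have h := sbB_shift n ε j a b (show 0 ≤ j by omega)
      rw [Nat.sub_zero] at h
      rw [h]; rfl
    have hd3 : sbA n ε j a b (n+1-j) / 2 ^ (n+1-k) = sbA n ε j a b i := by
      have h := sbA_shift n ε j a b (show i ≤ n+1-j by omega)
      rw [show (n+1-j) - i = n+1-k by omega] at h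
      exact h
    have hd4 : sbA n ε j a b (n+1-j) / 2 ^ (n-k) = sbA n ε j a b (i+1) := by
      have h := sbA_shift n ε j a b (show i+1 ≤ n+1-j by omega)
      rw [show (n+1-j) - (i+1) = n-k by omega] at h
      exact h
    rw [box_div hbox2 (show k+1 = j+(i+1) by omega),
      sg_congr (box_div hbox2 (show k = j+i by omega)),
      sg_congr (show sbA n ε j a b (n+1-j) / 2 ^ (n-k) = sbA n ε j a b (i+1) / 2 ^ 0 by
        rw [pow_zero, Nat.div_one]; exact hd4),
      hd3, show k = j + i by omega, sbA]
    by_cases hc : ε (j+i) (sbA n ε j a b i) (b / 2 ^ (i+1)) * sg b i = 1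
    · rw [if_pos hc, sg_zero_odd]
      linear_combination hc
    · rw [if_neg hc]; simp only [Nat.add_zero]; rw [sg_zero_even]
      have hEm := (pm_mul (hε (j+i) (sbA n ε j a b i) (b / 2^(i+1))) (sg_mem b i)).resolve_left hc
      linear_combination -hEm

lemma forced_B (n : ℕ) (ε : ℕ → ℕ → ℕ → ℝ)
    (hε : ∀ k m₁ m₂, ε k m₁ m₂ = 1 ∨ ε k m₁ m₂ = -1)
    (j a b : ℕ) (hj : j ≤ n+1) (p₁ p₂ : ℕ)
    (hb1 : p₁ / 2 ^ (n+1-j) = a) (hb2 : p₂ / 2 ^ j = b) (hg : Good n ε p₁ p₂) :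
    ∀ i ≤ j, p₂ / 2 ^ (j - i) = sbB n ε j a b i := by
  intro i hij
  induction i with
  | zero => rw [Nat.sub_zero, hb2]; rfl
  | succ i ih =>
    have hij' : i ≤ j := by omega
    have ih' := ih hij'
    have hg' := hg (j-1-i) (by rw [Finset.mem_range]; omega)
    rw [box_div hb1 (show n+1-(j-1-i) = (n+1-j)+(i+1) by omega),
      sg_congr (box_div hb1 (show n-(j-1-i) = (n+1-j)+i by omega)),
      show p₂ / 2 ^ ((j-1-i)+1) = sbB n ε j a b i by
        rw [show (j-1-i)+1 = j-i by omega]; exact ih'] at hg'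
    have hE := pm_mul (hε (j-1-i) (a / 2^(i+1)) (sbB n ε j a b i)) (sg_mem a i)
    have hsg := pm_cancel hE (sg_mem p₂ (j-1-i)) hg'
    rw [sg_congr (show p₂ / 2 ^ (j-1-i) = p₂ / 2 ^ (j-(i+1)) by
      rw [show j-1-i = j-(i+1) by omega])] at hsg
    have hdm := Nat.div_add_mod (p₂ / 2 ^ (j-(i+1))) 2
    have h2 : p₂ / 2 ^ (j-(i+1)) / 2 = sbB n ε j a b i := by
      rw [div_succ_div_two, show (j-(i+1))+1 = j-i by omega]; exact ih'
    rw [h2] at hdm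
    rw [show sg p₂ (j-(i+1)) = if (p₂ / 2 ^ (j-(i+1))) % 2 = 1 then (1:ℝ) else -1 from rfl] at hsg
    rw [sbB]
    by_cases hc : ε (j-1-i) (a / 2 ^ (i+1)) (sbB n ε j a b i) * sg a i = 1
    · rw [if_pos hc]
      rw [hc] at hsg
      have hr : (p₂ / 2 ^ (j-(i+1))) % 2 = 1 := by
        by_contra h
        rw [if_neg h] at hsg
        norm_num at hsg
      omega
    · rw [if_neg hc]
      rw [hE.resolve_left hc] at hsg
      have hr : (p₂ / 2 ^ (j-(i+1))) % 2 ≠ 1 := by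
        intro h
        rw [if_pos h] at hsg
        norm_num at hsg
      omega

lemma forced_A (n : ℕ) (ε : ℕ → ℕ → ℕ → ℝ)
    (hε : ∀ k m₁ m₂, ε k m₁ m₂ = 1 ∨ ε k m₁ m₂ = -1)
    (j a b : ℕ) (hj : j ≤ n+1) (p₁ p₂ : ℕ)
    (hb1 : p₁ / 2 ^ (n+1-j) = a) (hb2 : p₂ / 2 ^ j = b) (hg : Good n ε p₁ p₂) :
    ∀ i ≤ n+1-j, p₁ / 2 ^ ((n+1-j) - i) = sbA n ε j a b i := by
  intro i hij
  induction i with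
  | zero => rw [Nat.sub_zero, hb1]; rfl
  | succ i ih =>
    have hij' : i ≤ n+1-j := by omega
    have ih' := ih hij'
    have hg' := hg (j+i) (by rw [Finset.mem_range]; omega)
    rw [box_div hb2 (show (j+i)+1 = j+(i+1) by omega),
      sg_congr (box_div hb2 (show j+i = j+i by omega)),
      show p₁ / 2 ^ (n+1-(j+i)) = sbA n ε j a b i by
        rw [show n+1-(j+i) = (n+1-j)-i by omega]; exact ih'] at hg'
    have hg'' : (ε (j+i) (sbA n ε j a b i) (b / 2^(i+1)) * sg b i) * sg p₁ (n-(j+i)) = 1 := by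
      linear_combination hg'
    have hE := pm_mul (hε (j+i) (sbA n ε j a b i) (b / 2^(i+1))) (sg_mem b i)
    have hsg := pm_cancel hE (sg_mem p₁ (n-(j+i))) hg''
    rw [sg_congr (show p₁ / 2 ^ (n-(j+i)) = p₁ / 2 ^ ((n+1-j)-(i+1)) by
      rw [show n-(j+i) = (n+1-j)-(i+1) by omega])] at hsg
    have hdm := Nat.div_add_mod (p₁ / 2 ^ ((n+1-j)-(i+1))) 2
    have h2 : p₁ / 2 ^ ((n+1-j)-(i+1)) / 2 = sbA n ε j a b i := by
      rw [div_succ_div_two, show ((n+1-j)-(i+1))+1 = (n+1-j)-i by omega]; exact ih'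
    rw [h2] at hdm
    rw [show sg p₁ ((n+1-j)-(i+1)) = if (p₁ / 2 ^ ((n+1-j)-(i+1))) % 2 = 1 then (1:ℝ) else -1 from rfl] at hsg
    rw [sbA]
    by_cases hc : ε (j+i) (sbA n ε j a b i) (b / 2 ^ (i+1)) * sg b i = 1
    · rw [if_pos hc]
      rw [hc] at hsg
      have hr : (p₁ / 2 ^ ((n+1-j)-(i+1))) % 2 = 1 := by
        by_contra h
        rw [if_neg h] at hsg
        norm_num at hsg
      omega
    · rw [if_neg hc]
      rw [hE.resolve_left hc] at hsg
      have hr : (p₁ / 2 ^ ((n+1-j)-(i+1))) % 2 ≠ 1 := by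
        intro h
        rw [if_pos h] at hsg
        norm_num at hsg
      omega

open Classical in
lemma key (n : ℕ) (ε : ℕ → ℕ → ℕ → ℝ)
    (hε : ∀ k m₁ m₂, ε k m₁ m₂ = 1 ∨ ε k m₁ m₂ = -1)
    (j : ℕ) (hj : j ≤ n+1) (a : ℕ) (ha : a < 2^j) (b : ℕ) (hb : b < 2^(n+1-j)) :
    ((Finset.range (2^(n+1)) ×ˢ Finset.range (2^(n+1))).filter
        (fun q => Good n ε q.1 q.2)).filter
      (fun q => q.1 / 2^(n+1-j) = a ∧ q.2 / 2^j = b)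
    = {(sbA n ε j a b (n+1-j), sbB n ε j a b j)} := by
  rw [Finset.eq_singleton_iff_unique_mem]
  constructor
  · rw [Finset.mem_filter, Finset.mem_filter, Finset.mem_product,
      Finset.mem_range, Finset.mem_range]
    have hA : sbA n ε j a b (n+1-j) / 2 ^ (n+1-j) = a := by
      have h := sbA_shift n ε j a b (show 0 ≤ n+1-j by omega)
      rw [Nat.sub_zero] at h
      rw [h]; rfl
    have hB : sbB n ε j a b j / 2 ^ j = b := by
      have h := sbB_shift n ε j a b (show 0 ≤ j by omega)
      rw [Nat.sub_zero] at h
      rw [h]; rfl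
    have hAlt : sbA n ε j a b (n+1-j) < 2^(n+1) := by
      have h := sbA_bound n ε j a b ha (n+1-j)
      rw [show j + (n+1-j) = n+1 by omega] at h
      exact h
    have hBlt : sbB n ε j a b j < 2^(n+1) := by
      have h := sbB_bound n ε j a b hb j
      rw [show (n+1-j) + j = n+1 by omega] at h
      exact h
    exact ⟨⟨⟨hAlt, hBlt⟩, good_sb n ε hε j a b hj⟩, hA, hB⟩
  · intro q hq
    rw [Finset.mem_filter, Finset.mem_filter, Finset.mem_product,
      Finset.mem_range, Finset.mem_range] at hq
    obtain ⟨⟨⟨hq1, hq2⟩, hGood⟩, hb1, hb2⟩ := hq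
    have hA := forced_A n ε hε j a b hj q.1 q.2 hb1 hb2 hGood (n+1-j) le_rfl
    have hB := forced_B n ε hε j a b hj q.1 q.2 hb1 hb2 hGood j le_rfl
    rw [Nat.sub_self, pow_zero, Nat.div_one] at hA hB
    rw [Prod.ext_iff]
    exact ⟨hA, hB⟩

/--  attains the value `n+1` is a union of exactly
`2^{n+1}` dyadic squares of side `2^{-(n+1)}`, and every dyadic rectangle of area `2^{-(n+1)}`
contains exactly one of these squares (the square with lower-left corner
`(q₁ 2^{-(n+1)}, q₂ 2^{-(n+1)})` is contained in the rectangle of shape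
`2^{-j} × 2^{-(n+1-j)}` indexed by `(a,b)` iff `q₁ / 2^{n+1-j} = a` and `q₂ / 2^j = b`). -/
theorem signed_small_ball_extremal_set (n : ℕ) (ε : ℕ → ℕ → ℕ → ℝ)
    (hε : ∀ k m₁ m₂, ε k m₁ m₂ = 1 ∨ ε k m₁ m₂ = -1) :
    ∃ S : Finset (ℕ × ℕ),
      (∀ q ∈ S, q.1 < 2 ^ (n + 1) ∧ q.2 < 2 ^ (n + 1)) ∧
      S.card = 2 ^ (n + 1) ∧
      ({p | p ∈ unitSq ∧ sbSum n ε p = n + 1}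
        = ⋃ q ∈ S, dyadicRect (n + 1) q.1 (n + 1) q.2) ∧
      (∀ j ≤ n + 1, ∀ a < 2 ^ j, ∀ b < 2 ^ (n + 1 - j),
        (S.filter (fun q => q.1 / 2 ^ (n + 1 - j) = a ∧ q.2 / 2 ^ j = b)).card = 1) := by
  classical
  refine ⟨(Finset.range (2^(n+1)) ×ˢ Finset.range (2^(n+1))).filter
      (fun q => Good n ε q.1 q.2), ?_, ?_, ?_, ?_⟩
  · intro q hq
    rw [Finset.mem_filter, Finset.mem_product, Finset.mem_range, Finset.mem_range] at hq
    exact ⟨hq.1.1, hq.1.2⟩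
  · rw [Finset.card_eq_sum_card_fiberwise (f := fun (q : ℕ × ℕ) => q.1)
      (t := Finset.range (2^(n+1))) (fun x hx => by
        rw [Finset.mem_coe, Finset.mem_filter, Finset.mem_product] at hx; exact hx.1.1)]
    have h1 : ∀ a ∈ Finset.range (2^(n+1)),
        (((Finset.range (2^(n+1)) ×ˢ Finset.range (2^(n+1))).filter
          (fun q => Good n ε q.1 q.2)).filter (fun (q : ℕ × ℕ) => q.1 = a)).card = 1 := by
      intro a ha
      have hb0 : (0:ℕ) < 2 ^ (n+1-(n+1)) := by positivity
      have hk := key n ε hε (n+1) le_rfl a (Finset.mem_range.mp ha) 0 hb0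
      have hEq : ((Finset.range (2^(n+1)) ×ˢ Finset.range (2^(n+1))).filter
            (fun q => Good n ε q.1 q.2)).filter (fun q => q.1 = a)
          = ((Finset.range (2^(n+1)) ×ˢ Finset.range (2^(n+1))).filter
            (fun q => Good n ε q.1 q.2)).filter
            (fun q => q.1 / 2^(n+1-(n+1)) = a ∧ q.2 / 2^(n+1) = 0) := by
        apply Finset.filter_congr
        intro q hq
        rw [Finset.mem_filter, Finset.mem_product, Finset.mem_range, Finset.mem_range] at hq
        simp [Nat.sub_self, Nat.div_eq_of_lt hq.1.2]
      rw [hEq, hk, Finset.card_singleton]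

    rw [Finset.sum_congr rfl h1]
    simp
  · ext p
    simp only [Set.mem_setOf_eq, Set.mem_iUnion, Finset.mem_filter, Finset.mem_product,
      Finset.mem_range, exists_prop]
    have hmemSq : ∀ (x : ℝ × ℝ) (k₁ m₁ k₂ m₂ : ℕ), x ∈ dyadicRect k₁ m₁ k₂ m₂ ↔
        (((m₁:ℝ)/2^k₁ ≤ x.1 ∧ x.1 < ((m₁:ℝ)+1)/2^k₁) ∧
         ((m₂:ℝ)/2^k₂ ≤ x.2 ∧ x.2 < ((m₂:ℝ)+1)/2^k₂)) := fun _ _ _ _ _ => Iff.rfl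
    have hmemU : p ∈ unitSq ↔ ((0 ≤ p.1 ∧ p.1 < 1) ∧ (0 ≤ p.2 ∧ p.2 < 1)) := Iff.rfl
    have h2p : (0:ℝ) < 2^(n+1) := by positivity
    constructor
    · rintro ⟨hpu, hps⟩
      obtain ⟨⟨h10, h11⟩, h20, h21⟩ := hmemU.mp hpu
      obtain ⟨q₁, hq₁⟩ : ∃ q₁, ⌊p.1 * 2^(n+1)⌋₊ = q₁ := ⟨_, rfl⟩
      obtain ⟨q₂, hq₂⟩ : ∃ q₂, ⌊p.2 * 2^(n+1)⌋₊ = q₂ := ⟨_, rfl⟩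
      have hp1 : (q₁:ℝ)/2^(n+1) ≤ p.1 := by
        rw [div_le_iff₀ h2p, ← hq₁]
        exact Nat.floor_le (mul_nonneg h10 h2p.le)
      have hp1' : p.1 < ((q₁:ℝ)+1)/2^(n+1) := by
        rw [lt_div_iff₀ h2p, ← hq₁]
        have := Nat.lt_floor_add_one (p.1 * 2^(n+1))
        push_cast at this ⊢
        linarith
      have hq1lt : q₁ < 2^(n+1) := by
        rw [← hq₁, Nat.floor_lt (mul_nonneg h10 h2p.le)]
        push_cast
        nlinarith
      have hp2 : (q₂:ℝ)/2^(n+1) ≤ p.2 := by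
        rw [div_le_iff₀ h2p, ← hq₂]
        exact Nat.floor_le (mul_nonneg h20 h2p.le)
      have hp2' : p.2 < ((q₂:ℝ)+1)/2^(n+1) := by
        rw [lt_div_iff₀ h2p, ← hq₂]
        have := Nat.lt_floor_add_one (p.2 * 2^(n+1))
        push_cast at this ⊢
        linarith
      have hq2lt : q₂ < 2^(n+1) := by
        rw [← hq₂, Nat.floor_lt (mul_nonneg h20 h2p.le)]
        push_cast
        nlinarith
      rw [sbSum_eval n ε q₁ q₂ hq1lt hq2lt p hp1 hp1' hp2 hp2'] at hps
      have hf : ∀ k ∈ Finset.range (n+1),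
          ε k (q₁ / 2 ^ (n + 1 - k)) (q₂ / 2 ^ (k + 1)) * sg q₁ (n - k) * sg q₂ k = 1 ∨
          ε k (q₁ / 2 ^ (n + 1 - k)) (q₂ / 2 ^ (k + 1)) * sg q₁ (n - k) * sg q₂ k = -1 :=
        fun k _ => pm_mul (pm_mul (hε _ _ _) (sg_mem _ _)) (sg_mem _ _)
      have hGood : Good n ε q₁ q₂ := (sum_pm_eq_card hf).mp (by exact_mod_cast hps)
      exact ⟨(q₁,q₂), ⟨⟨hq1lt, hq2lt⟩, hGood⟩,
        (hmemSq p (n+1) q₁ (n+1) q₂).mpr ⟨⟨hp1, hp1'⟩, hp2, hp2'⟩⟩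
    · rintro ⟨q, ⟨⟨hq1, hq2⟩, hGood⟩, hpr⟩
      obtain ⟨⟨hp1, hp1'⟩, hp2, hp2'⟩ := (hmemSq p (n+1) q.1 (n+1) q.2).mp hpr
      have hc1 : ((q.1:ℝ)+1) ≤ 2^(n+1) := by
        have h : (q.1+1 : ℕ) ≤ 2^(n+1) := hq1
        exact_mod_cast h
      have hc2 : ((q.2:ℝ)+1) ≤ 2^(n+1) := by
        have h : (q.2+1 : ℕ) ≤ 2^(n+1) := hq2
        exact_mod_cast h
      have hf : ∀ k ∈ Finset.range (n+1),
          ε k (q.1 / 2 ^ (n + 1 - k)) (q.2 / 2 ^ (k + 1)) * sg q.1 (n - k) * sg q.2 k = 1 ∨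
          ε k (q.1 / 2 ^ (n + 1 - k)) (q.2 / 2 ^ (k + 1)) * sg q.1 (n - k) * sg q.2 k = -1 :=
        fun k _ => pm_mul (pm_mul (hε _ _ _) (sg_mem _ _)) (sg_mem _ _)
      refine ⟨hmemU.mpr ⟨⟨le_trans (by positivity) hp1,
          lt_of_lt_of_le hp1' (by rw [div_le_one h2p]; exact hc1)⟩,
          le_trans (by positivity) hp2,
          lt_of_lt_of_le hp2' (by rw [div_le_one h2p]; exact hc2)⟩, ?_⟩
      rw [sbSum_eval n ε q.1 q.2 hq1 hq2 p hp1 hp1' hp2 hp2']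
      exact_mod_cast (sum_pm_eq_card hf).mpr hGood
  · intro j hj a ha b hb
    rw [key n ε hε j hj a ha b hb, Finset.card_singleton]
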